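/- Let E be a category with finite limits and L a class of maps containing the isomorphisms, closed under composition and under base change. If L is closed under diagonals (Δ(u) ∈ L whenever u ∈ L), then the full subcategory of the arrow category spanned by L is closed under finite limits (in particular under pullbacks of cospans of arrows). -/

import Mathlib

/-!
STATEMENT 16: a class closed under composition, base change and diagonals, containing the isomorphisms, is closed under finite limits in the arrow category.
-/

open CategoryTheory CategoryTheory.Limits

universe w v u

namespace Paper

variable {E : Type u} [Category.{v} E]

/-- `u` is left orthogonal to `f`: every commutative square from `u` to `f` admits a
unique diagonal filler. -/
def Orth {A B X Y : E} (u : A ⟶ B) (f : X ⟶ Y) : Prop :=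
  ∀ (x : A ⟶ X) (y : B ⟶ Y), x ≫ f = u ≫ y → ∃! d : B ⟶ X, u ≫ d = x ∧ d ≫ f = y

/-- A factorization system `(L, R)`: two replete classes of maps with `L` orthogonal to
`R`, such that every map factors as a map in `L` followed by a map in `R`. -/
structure FactorizationSystem (E : Type u) [Category.{v} E] where
  /-- the left class -/
  L : MorphismProperty E
  /-- the right class -/
  R : MorphismProperty E
  replete_L : ∀ ⦃X Y X' Y' : E⦄ (f : X ⟶ Y) (f' : X' ⟶ Y'),
    (Arrow.mk f ≅ Arrow.mk f') → L f → L f'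
  replete_R : ∀ ⦃X Y X' Y' : E⦄ (f : X ⟶ Y) (f' : X' ⟶ Y'),
    (Arrow.mk f ≅ Arrow.mk f') → R f → R f'
  orth : ∀ ⦃A B X Y : E⦄ (u : A ⟶ B) (f : X ⟶ Y), L u → R f → Orth u f
  fac : ∀ ⦃X Y : E⦄ (f : X ⟶ Y), ∃ (Z : E) (l : X ⟶ Z) (r : Z ⟶ Y),
    L l ∧ R r ∧ l ≫ r = f

/-- `P` is stable under base change: any pullback of a map in `P` is in `P`. -/
def StableUnderBaseChange' (P : MorphismProperty E) : Prop :=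
  ∀ ⦃W X Y Z : E⦄ (fst : W ⟶ X) (snd : W ⟶ Y) (f : X ⟶ Z) (g : Y ⟶ Z),
    IsPullback fst snd f g → P f → P snd

end Paper

namespace Paper

universe v₂ u₂
variable {E : Type u} [Category.{v} E]

attribute [local simp] prod.lift_fst prod.lift_snd prod.lift_fst_assoc prod.lift_snd_assoc
  pullback.lift_fst pullback.lift_snd pullback.lift_fst_assoc pullback.lift_snd_assoc
  equalizer.lift_ι equalizer.lift_ι_assoc Pi.lift_π Pi.lift_π_assoc

/-- The full subcategory of the arrow category spanned by `P` is closed under finite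
limits. -/
def ClosedUnderFiniteLimitsArrow (P : MorphismProperty E) : Prop :=
  ∀ (J : Type) [SmallCategory J] [FinCategory J] (D : J ⥤ Arrow E) (c : Cone D),
    IsLimit c → (∀ j, P (D.obj j).hom) → P c.pt.hom

section Aux

variable [HasFiniteLimits E] {L : MorphismProperty E}
variable (hiso : ∀ ⦃X Y : E⦄ (f : X ⟶ Y), IsIso f → L f)
variable (hcomp : ∀ ⦃X Y Z : E⦄ (f : X ⟶ Y) (g : Y ⟶ Z), L f → L g → L (f ≫ g))
variable (hbc : StableUnderBaseChange' L)
variable (hdiag : ∀ ⦃X Y : E⦄ (u : X ⟶ Y), L u → L (pullback.diagonal u))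

include hiso hcomp in
lemma aux_respectsIso : L.RespectsIso :=
  MorphismProperty.RespectsIso.mk L
    (fun e f hf => hcomp _ _ (hiso e.hom inferInstance) hf)
    (fun e f hf => hcomp _ _ hf (hiso e.hom inferInstance))

lemma aux_isPullback_prodMapIdRight {X Y : E} (a : X ⟶ Y) (W : E) :
    IsPullback (prod.fst : X ⨯ W ⟶ X) (prod.map a (𝟙 W)) a (prod.fst : Y ⨯ W ⟶ Y) := by
  refine ⟨⟨by simp⟩, ⟨PullbackCone.IsLimit.mk _
    (fun s => prod.lift s.fst (s.snd ≫ prod.snd)) (fun s => by simp) (fun s => ?_) (fun s m h1 h2 => ?_)⟩⟩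
  · apply Limits.prod.hom_ext
    · simpa using s.condition
    · simp
  · apply Limits.prod.hom_ext
    · simpa using h1
    · have := h2 =≫ (prod.snd : Y ⨯ W ⟶ W)
      simpa using this

lemma aux_isPullback_prodMapIdLeft {Z W : E} (b : Z ⟶ W) (X : E) :
    IsPullback (prod.snd : X ⨯ Z ⟶ Z) (prod.map (𝟙 X) b) b (prod.snd : X ⨯ W ⟶ W) := by
  refine ⟨⟨by simp⟩, ⟨PullbackCone.IsLimit.mk _
    (fun s => prod.lift (s.snd ≫ prod.fst) s.fst) (fun s => by simp) (fun s => ?_) (fun s m h1 h2 => ?_)⟩⟩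
  · apply Limits.prod.hom_ext
    · simp
    · simpa using s.condition
  · apply Limits.prod.hom_ext
    · have := h2 =≫ (prod.fst : X ⨯ W ⟶ X)
      simpa using this
    · simpa using h1

include hcomp hbc in
lemma aux_L_prodMap {X Y Z W : E} (a : X ⟶ Y) (b : Z ⟶ W) (ha : L a) (hb : L b) :
    L (prod.map a b) := by
  have h : prod.map (𝟙 X) b ≫ prod.map a (𝟙 W) = prod.map a b := by simp
  rw [← h]
  exact hcomp _ _
    (hbc _ _ _ _ (aux_isPullback_prodMapIdLeft b X) hb)
    (hbc _ _ _ _ (aux_isPullback_prodMapIdRight a W) ha)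

/-- The product over `Option α` decomposes as a binary product. -/
noncomputable def auxOptionIso {α : Type} [Fintype α] (f : Option α → E) :
    (∏ᶜ f : E) ≅ f none ⨯ ∏ᶜ (fun a => f (some a)) where
  hom := prod.lift (Pi.π f none) (Pi.lift fun a => Pi.π f (some a))
  inv := Pi.lift fun o => Option.casesOn o prod.fst (fun a => prod.snd ≫ Pi.π _ a)
  hom_inv_id := by
    apply limit.hom_ext
    rintro ⟨(_ | a)⟩ <;> simp
  inv_hom_id := by
    apply Limits.prod.hom_ext
    · simp
    · apply limit.hom_ext
      rintro ⟨a⟩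
      simp

include hiso hcomp hbc in
lemma aux_L_piMap (ι : Type) [Fintype ι] (f g : ι → E) (u : ∀ i, f i ⟶ g i)
    (hu : ∀ i, L (u i)) : L (Limits.Pi.map u) := by
  haveI := aux_respectsIso hiso hcomp
  revert f g u hu
  refine Fintype.induction_empty_option
    (P := fun (α : Type) [Fintype α] => ∀ (f g : α → E) (u : ∀ i, f i ⟶ g i),
      (∀ i, L (u i)) → L (Limits.Pi.map u)) ?_ ?_ ?_ ι (h_fintype := ‹_›)
  case refine_1 =>
    intro α β _ e ih f g u hu
    haveI : Fintype α := Fintype.ofEquiv β e.symm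
    have h := ih (fun a => f (e a)) (fun a => g (e a)) (fun a => u (e a)) (fun a => hu (e a))
    refine (L.arrow_mk_iso_iff ?_).1 h
    refine Arrow.isoMk (Pi.whiskerEquiv e (fun a => Iso.refl _))
      (Pi.whiskerEquiv e (fun a => Iso.refl _)) ?_
    apply limit.hom_ext
    rintro ⟨b⟩
    simp [Pi.whiskerEquiv, Pi.map', Limits.Pi.map]
  case refine_2 =>
    intro f g u hu
    refine hiso _ ?_
    refine ⟨Pi.lift (fun i => PEmpty.elim i), ?_, ?_⟩
    · apply limit.hom_ext; rintro ⟨⟨⟩⟩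
    · apply limit.hom_ext; rintro ⟨⟨⟩⟩
  case refine_3 =>
    intro α _ ih f g u hu
    have key : L (prod.map (u none) (Limits.Pi.map fun a => u (some a))) :=
      aux_L_prodMap hcomp hbc _ _ (hu none)
        (ih (fun a => f (some a)) (fun a => g (some a)) (fun a => u (some a))
          (fun a => hu (some a)))
    refine (L.arrow_mk_iso_iff ?_).1 key
    refine Arrow.isoMk (auxOptionIso f).symm (auxOptionIso g).symm ?_
    apply limit.hom_ext
    rintro ⟨(_ | a)⟩ <;> simp [auxOptionIso]

include hcomp hbc hdiag in
lemma aux_L_equalizerMap {X X' Y Y' : E} (f g : X ⟶ X') (f' g' : Y ⟶ Y') (p : X ⟶ Y)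
    (q : X' ⟶ Y') (hfq : f ≫ q = p ≫ f') (hgq : g ≫ q = p ≫ g') (hp : L p) (hq : L q)
    (w : (equalizer.ι f g ≫ p) ≫ f' = (equalizer.ι f g ≫ p) ≫ g') :
    L (equalizer.lift (equalizer.ι f g ≫ p) w) := by
  set e : equalizer f g ⟶ equalizer f' g' := equalizer.lift (equalizer.ι f g ≫ p) w with he
  -- the pullback `X ×_Y Eq(f',g')`
  set ι' : equalizer f' g' ⟶ Y := equalizer.ι f' g' with hι'
  have hcond : equalizer.ι f g ≫ p = e ≫ ι' := by simp [he, hι']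
  set i : equalizer f g ⟶ pullback p ι' := pullback.lift (equalizer.ι f g) e hcond with hi
  have hei : e = i ≫ pullback.snd p ι' := by simp [hi]
  -- the comparison map to the pullback of the diagonal of `q`
  have hwb : (pullback.fst p ι' ≫ f) ≫ q = (pullback.fst p ι' ≫ g) ≫ q := by
    rw [Category.assoc, Category.assoc, hfq, hgq, ← Category.assoc, ← Category.assoc,
      pullback.condition, Category.assoc, Category.assoc, equalizer.condition]
  set b : pullback p ι' ⟶ pullback q q :=
    pullback.lift (pullback.fst p ι' ≫ f) (pullback.fst p ι' ≫ g) hwb with hb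
  have comm : (equalizer.ι f g ≫ f) ≫ pullback.diagonal q = i ≫ b := by
    apply pullback.hom_ext <;> simp [hb, hi, equalizer.condition f g]
  have sq : IsPullback (equalizer.ι f g ≫ f) i (pullback.diagonal q) b := by
    apply IsPullback.of_isLimit
      (c := PullbackCone.mk (equalizer.ι f g ≫ f) i comm)
    refine PullbackCone.IsLimit.mk comm (fun s => equalizer.lift (s.snd ≫ pullback.fst p ι') ?_)
      (fun s => ?_) (fun s => ?_) (fun s m h1 h2 => ?_)
    · have c1 := s.condition =≫ (pullback.fst q q)
      have c2 := s.condition =≫ (pullback.snd q q)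
      simp [hb] at c1 c2
      rw [Category.assoc, Category.assoc, ← c1, ← c2]
    · have c1 := s.condition =≫ (pullback.fst q q)
      simp [hb] at c1
      rw [← Category.assoc, equalizer.lift_ι, Category.assoc, ← c1]
    · apply pullback.hom_ext
      · simp [hi]
      · rw [Category.assoc]
        have : i ≫ pullback.snd p ι' = e := by simp [hi]
        rw [this]
        apply equalizer.hom_ext
        rw [Category.assoc, ← hι', ← hcond]
        rw [← Category.assoc, equalizer.lift_ι, Category.assoc, pullback.condition,
          ← Category.assoc]
    · apply equalizer.hom_ext
      have := h2 =≫ (pullback.fst p ι')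
      simp [hi] at this
      simp [this]
  have hi' : L i := hbc _ _ _ _ sq (hdiag q hq)
  have hsnd : L (pullback.snd p ι') :=
    hbc _ _ _ _ (IsPullback.of_hasPullback p ι') hp
  rw [he] at hei ⊢
  rw [hei]
  exact hcomp _ _ hi' hsnd

include hiso hcomp hbc hdiag in
lemma aux_L_limMap {J : Type} [SmallCategory J] [FinCategory J] (X Y : J ⥤ E) (θ : X ⟶ Y)
    (hθ : ∀ j, L (θ.app j)) : L (limMap θ) := by
  haveI := aux_respectsIso hiso hcomp
  classical
  -- the equalizer-of-products presentation of the limits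
  let κ := Σ p : J × J, p.1 ⟶ p.2
  let sX : (∏ᶜ X.obj : E) ⟶ ∏ᶜ (fun k : κ => X.obj k.1.2) :=
    Pi.lift fun k => Pi.π X.obj k.1.1 ≫ X.map k.2
  let tX : (∏ᶜ X.obj : E) ⟶ ∏ᶜ (fun k : κ => X.obj k.1.2) :=
    Pi.lift fun k => Pi.π X.obj k.1.2
  let sY : (∏ᶜ Y.obj : E) ⟶ ∏ᶜ (fun k : κ => Y.obj k.1.2) :=
    Pi.lift fun k => Pi.π Y.obj k.1.1 ≫ Y.map k.2
  let tY : (∏ᶜ Y.obj : E) ⟶ ∏ᶜ (fun k : κ => Y.obj k.1.2) :=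
    Pi.lift fun k => Pi.π Y.obj k.1.2
  let p : (∏ᶜ X.obj : E) ⟶ ∏ᶜ Y.obj := Limits.Pi.map fun j => θ.app j
  let q : (∏ᶜ (fun k : κ => X.obj k.1.2) : E) ⟶ ∏ᶜ (fun k : κ => Y.obj k.1.2) :=
    Limits.Pi.map fun k : κ => θ.app k.1.2
  have hfq : sX ≫ q = p ≫ sY := by
    apply limit.hom_ext
    rintro ⟨k⟩
    simp [sX, sY, p, q, θ.naturality]
  have hgq : tX ≫ q = p ≫ tY := by
    apply limit.hom_ext
    rintro ⟨k⟩
    simp [tX, tY, p, q]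
  have w : (equalizer.ι sX tX ≫ p) ≫ sY = (equalizer.ι sX tX ≫ p) ≫ tY := by
    rw [Category.assoc, Category.assoc, ← hfq, ← hgq, ← Category.assoc, ← Category.assoc,
      equalizer.condition]
  have key : L (equalizer.lift (equalizer.ι sX tX ≫ p) w) :=
    aux_L_equalizerMap hcomp hbc hdiag sX tX sY tY p q hfq hgq
      (aux_L_piMap hiso hcomp hbc J _ _ _ (fun j => hθ j))
      (aux_L_piMap hiso hcomp hbc κ _ _ _ (fun k => hθ k.1.2)) w
  -- the canonical limit cones built from products and equalizers
  let cX : Cone X := HasLimitOfHasProductsOfHasEqualizers.buildLimit sX tX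
    (fun k => by simp [sX]) (fun k => by simp [tX])
    (Fork.ofι (equalizer.ι sX tX) (equalizer.condition sX tX))
  have hcX : IsLimit cX := HasLimitOfHasProductsOfHasEqualizers.buildIsLimit sX tX _ _
    (productIsProduct X.obj) (productIsProduct _) (equalizerIsEqualizer sX tX)
  let cY : Cone Y := HasLimitOfHasProductsOfHasEqualizers.buildLimit sY tY
    (fun k => by simp [sY]) (fun k => by simp [tY])
    (Fork.ofι (equalizer.ι sY tY) (equalizer.condition sY tY))
  have hcY : IsLimit cY := HasLimitOfHasProductsOfHasEqualizers.buildIsLimit sY tY _ _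
    (productIsProduct Y.obj) (productIsProduct _) (equalizerIsEqualizer sY tY)
  refine (L.arrow_mk_iso_iff ?_).1 key
  refine Arrow.isoMk (hcX.conePointUniqueUpToIso (limit.isLimit X))
    (hcY.conePointUniqueUpToIso (limit.isLimit Y)) ?_
  apply limit.hom_ext
  intro j
  have h1 : (hcX.conePointUniqueUpToIso (limit.isLimit X)).hom ≫ limit.π X j = cX.π.app j :=
    IsLimit.conePointUniqueUpToIso_hom_comp hcX (limit.isLimit X) j
  have h2 : (hcY.conePointUniqueUpToIso (limit.isLimit Y)).hom ≫ limit.π Y j = cY.π.app j :=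
    IsLimit.conePointUniqueUpToIso_hom_comp hcY (limit.isLimit Y) j
  refine (Category.assoc _ _ _).trans (Eq.trans ?_ (Category.assoc _ _ _).symm)
  show (hcX.conePointUniqueUpToIso (limit.isLimit X)).hom ≫ (limMap θ ≫ limit.π Y j) =
    equalizer.lift (equalizer.ι sX tX ≫ p) w ≫ ((hcY.conePointUniqueUpToIso (limit.isLimit Y)).hom ≫ limit.π Y j)
  rw [limMap_π, ← Category.assoc, h1]
  refine Eq.trans ?_ (congrArg (equalizer.lift (equalizer.ι sX tX ≫ p) w ≫ ·) h2).symm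
  show (equalizer.ι sX tX ≫ Pi.π X.obj j) ≫ θ.app j
    = equalizer.lift (equalizer.ι sX tX ≫ p) w ≫ equalizer.ι sY tY ≫ Pi.π Y.obj j
  rw [← Category.assoc, equalizer.lift_ι, Category.assoc]
  simp [p]

end Aux

/-- in a category with finite limits, if a class `L` contains the
isomorphisms, is closed under composition and base change, and is closed under
diagonals, then the full subcategory of the arrow category spanned by `L` is closed
under finite limits. -/
theorem closedUnderFiniteLimits_of_diagonals [HasFiniteLimits E]
    (L : MorphismProperty E)
    (hiso : ∀ ⦃X Y : E⦄ (f : X ⟶ Y), IsIso f → L f)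
    (hcomp : ∀ ⦃X Y Z : E⦄ (f : X ⟶ Y) (g : Y ⟶ Z), L f → L g → L (f ≫ g))
    (hbc : StableUnderBaseChange' L)
    (hdiag : ∀ ⦃X Y : E⦄ (u : X ⟶ Y), L u → L (pullback.diagonal u)) :
    ClosedUnderFiniteLimitsArrow L := by
  intro J _ _ D c hc hD
  haveI := aux_respectsIso hiso hcomp
  let X : J ⥤ E := D ⋙ Arrow.leftFunc
  let Y : J ⥤ E := D ⋙ Arrow.rightFunc
  let θ : X ⟶ Y :=
    { app := fun j => (D.obj j).hom
      naturality := fun i j f => Arrow.w (D.map f) }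
  have hlim : L (limMap θ) := aux_L_limMap hiso hcomp hbc hdiag X Y θ (fun j => hD j)
  -- the componentwise limit cone in the arrow category
  let c' : Cone D :=
    { pt := Arrow.mk (limMap θ)
      π :=
        { app := fun j => Arrow.homMk (u := limit.π X j) (v := limit.π Y j) (limMap_π θ j).symm
          naturality := fun i j f => by
            apply CommaMorphism.ext
            · exact (Category.id_comp _).trans (limit.w X f).symm
            · exact (Category.id_comp _).trans (limit.w Y f).symm } }
  have hc' : IsLimit c' :=
    { lift := fun s => Arrow.homMk (u := limit.lift X (Arrow.leftFunc.mapCone s))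
        (v := limit.lift Y (Arrow.rightFunc.mapCone s)) (by
          apply limit.hom_ext
          intro j
          refine (Category.assoc _ _ _).trans (Eq.trans ?_ (Category.assoc _ _ _).symm)
          show limit.lift X (Arrow.leftFunc.mapCone s) ≫ (limMap θ ≫ limit.π Y j) =
            s.pt.hom ≫ (limit.lift Y (Arrow.rightFunc.mapCone s) ≫ limit.π Y j)
          rw [limMap_π, ← Category.assoc, limit.lift_π]
          exact (Arrow.w (s.π.app j)).trans (congrArg (s.pt.hom ≫ ·) (limit.lift_π _ _)).symm)
      fac := fun s j => by
        apply CommaMorphism.ext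
        · exact limit.lift_π _ _
        · exact limit.lift_π _ _
      uniq := fun s m hm => by
        apply CommaMorphism.ext
        · apply limit.hom_ext
          intro j
          exact (congrArg CommaMorphism.left (hm j)).trans (limit.lift_π (F := X) (Arrow.leftFunc.mapCone s) j).symm
        · apply limit.hom_ext
          intro j
          exact (congrArg CommaMorphism.right (hm j)).trans (limit.lift_π (F := Y) (Arrow.rightFunc.mapCone s) j).symm }
  let iso : c'.pt ≅ c.pt := hc'.conePointUniqueUpToIso hc
  refine (L.arrow_mk_iso_iff ?_).1 hlim
  exact Arrow.isoMk (Arrow.leftFunc.mapIso iso) (Arrow.rightFunc.mapIso iso)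
    (Arrow.w iso.hom)

end Paper
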